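/- Let K ∈ O(Λ) be a Kantor involution relative to ν, i.e., an involution for which there is an orthogonal direct-sum decomposition ν⊥ = L ⊕ M, where M is spanned by two norm-0 vectors with inner product 1, such that K acts as −1 on L, fixes M pointwise, and fixes ν. Then the induced action of K on V = Λ/2Λ is the transvection in ν̄: x̄ ↦ x̄ + (x̄·ν̄)ν̄. -/

import Mathlib

noncomputable section

/- Entry-evaluation lemmas for 10-component vectors. -/
section VecEval
variable {α : Type*}
@[simp] lemma vec10_0 (a0 a1 a2 a3 a4 a5 a6 a7 a8 a9 : α) : (![a0,a1,a2,a3,a4,a5,a6,a7,a8,a9] : Fin 10 → α) 0 = a0 := rfl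
@[simp] lemma vec10_1 (a0 a1 a2 a3 a4 a5 a6 a7 a8 a9 : α) : (![a0,a1,a2,a3,a4,a5,a6,a7,a8,a9] : Fin 10 → α) 1 = a1 := rfl
@[simp] lemma vec10_2 (a0 a1 a2 a3 a4 a5 a6 a7 a8 a9 : α) : (![a0,a1,a2,a3,a4,a5,a6,a7,a8,a9] : Fin 10 → α) 2 = a2 := rfl
@[simp] lemma vec10_3 (a0 a1 a2 a3 a4 a5 a6 a7 a8 a9 : α) : (![a0,a1,a2,a3,a4,a5,a6,a7,a8,a9] : Fin 10 → α) 3 = a3 := rfl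
@[simp] lemma vec10_4 (a0 a1 a2 a3 a4 a5 a6 a7 a8 a9 : α) : (![a0,a1,a2,a3,a4,a5,a6,a7,a8,a9] : Fin 10 → α) 4 = a4 := rfl
@[simp] lemma vec10_5 (a0 a1 a2 a3 a4 a5 a6 a7 a8 a9 : α) : (![a0,a1,a2,a3,a4,a5,a6,a7,a8,a9] : Fin 10 → α) 5 = a5 := rfl
@[simp] lemma vec10_6 (a0 a1 a2 a3 a4 a5 a6 a7 a8 a9 : α) : (![a0,a1,a2,a3,a4,a5,a6,a7,a8,a9] : Fin 10 → α) 6 = a6 := rfl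
@[simp] lemma vec10_7 (a0 a1 a2 a3 a4 a5 a6 a7 a8 a9 : α) : (![a0,a1,a2,a3,a4,a5,a6,a7,a8,a9] : Fin 10 → α) 7 = a7 := rfl
@[simp] lemma vec10_8 (a0 a1 a2 a3 a4 a5 a6 a7 a8 a9 : α) : (![a0,a1,a2,a3,a4,a5,a6,a7,a8,a9] : Fin 10 → α) 8 = a8 := rfl
@[simp] lemma vec10_9 (a0 a1 a2 a3 a4 a5 a6 a7 a8 a9 : α) : (![a0,a1,a2,a3,a4,a5,a6,a7,a8,a9] : Fin 10 → α) 9 = a9 := rfl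
end VecEval

/-- The underlying rational vector space `ℚ¹⁰`; coordinates `0,…,7` are the `E₈`-part
`x₁,…,x₈`, coordinate `8` is `y` and coordinate `9` is `z`. -/
abbrev Vec : Type := Fin 10 → ℚ

/-- The bilinear form associated to the quadratic form
`(x₁,…,x₈;y,z)² = −x₁²−⋯−x₈²+2yz`. -/
def bil (x y : Vec) : ℚ :=
  x 8 * y 9 + x 9 * y 8 -
    (x 0 * y 0 + x 1 * y 1 + x 2 * y 2 + x 3 * y 3 +
     x 4 * y 4 + x 5 * y 5 + x 6 * y 6 + x 7 * y 7)

lemma bil_add_left (x y z : Vec) : bil (x + y) z = bil x z + bil y z := by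
  simp only [bil, Pi.add_apply]; ring

lemma bil_smul_left (c : ℚ) (x z : Vec) : bil (c • x) z = c * bil x z := by
  simp only [bil, Pi.smul_apply, smul_eq_mul]; ring

lemma bil_comm (x y : Vec) : bil x y = bil y x := by
  simp only [bil]; ring

lemma bil_add_right (x y z : Vec) : bil x (y + z) = bil x y + bil x z := by
  simp only [bil, Pi.add_apply]; ring

lemma bil_smul_right (c : ℚ) (x z : Vec) : bil x (c • z) = c * bil x z := by
  simp only [bil, Pi.smul_apply, smul_eq_mul]; ring

/-- Reflection in a vector `r` of norm `−2`, as a linear map:  `x ↦ x + (x·r)r`. -/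
def reflMap (r : Vec) : Vec →ₗ[ℚ] Vec where
  toFun x := x + bil x r • r
  map_add' x y := by
    show (x + y) + bil (x + y) r • r = (x + bil x r • r) + (y + bil y r • r)
    rw [bil_add_left, add_smul]; abel
  map_smul' c x := by
    show (c • x) + bil (c • x) r • r = (RingHom.id ℚ) c • (x + bil x r • r)
    rw [bil_smul_left]; simp [smul_add, smul_smul]

lemma reflMap_invol (r : Vec) (hr : bil r r = -2) : Function.Involutive (reflMap r) := by
  intro x
  show (x + bil x r • r) + bil (x + bil x r • r) r • r = x
  rw [bil_add_left, bil_smul_left, hr]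
  have h : bil x r + bil x r * (-2) = -(bil x r) := by ring
  rw [h, neg_smul]
  abel

/-- Reflection in a root `r` (a vector of norm `−2`), as a linear automorphism of `ℚ¹⁰`:
`x ↦ x + (x·r)r`. -/
def reflG (r : Vec) (hr : bil r r = -2) : Vec ≃ₗ[ℚ] Vec :=
  { reflMap r with
    invFun := reflMap r
    left_inv := reflMap_invol r hr
    right_inv := reflMap_invol r hr }

/-- integrality of the first eight coordinates -/
def lowInt (x : Vec) : Prop := ∀ i : Fin 10, i.val < 8 → ∃ n : ℤ, x i = n

/-- the first eight coordinates all lie in `ℤ + ½` -/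
def lowHalf (x : Vec) : Prop := ∀ i : Fin 10, i.val < 8 → ∃ n : ℤ, x i = n + 1/2

/-- the sum `x₁ + ⋯ + x₈` of the first eight coordinates -/
def sum8 (x : Vec) : ℚ := x 0 + x 1 + x 2 + x 3 + x 4 + x 5 + x 6 + x 7

lemma bil_sub_left (x y z : Vec) : bil (x - y) z = bil x z - bil y z := by
  simp only [bil, Pi.sub_apply]; ring

lemma bil_sub_right (x y z : Vec) : bil x (y - z) = bil x y - bil x z := by
  simp only [bil, Pi.sub_apply]; ring

/-- Membership in the Enriques lattice `Λ` (the "even" coordinate system):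
`y, z ∈ ℤ`, and `x₁,…,x₈` are either all integers or all in `ℤ + ½`,
with `x₁ + ⋯ + x₈` even. -/
def mem (x : Vec) : Prop :=
  (∃ n : ℤ, x 8 = n) ∧ (∃ n : ℤ, x 9 = n) ∧
    (lowInt x ∨ lowHalf x) ∧ (∃ k : ℤ, sum8 x = 2 * k)

/-- `g` is an isometry of the lattice `Λ`: a linear automorphism of the ambient
space which maps `Λ` bijectively onto itself and preserves the bilinear form.
(The group `O(Λ)` is the group of all such `g`.) -/
def IsIsometry (g : Vec ≃ₗ[ℚ] Vec) : Prop :=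
  (∀ x : Vec, mem x ↔ mem (g x)) ∧ ∀ x y : Vec, bil (g x) (g y) = bil x y

/-- the vector `(0,…,0;1,1)`, a positive-norm vector singling out the future cone -/
def eU : Vec := ![0,0,0,0,0,0,0,0,1,1]

/-- `v` lies in the future cone: it has positive norm and lies in the same
component of `{v : v·v > 0}` as `(0,…,0;1,1)`. -/
def InFuture (v : Vec) : Prop := 0 < bil v v ∧ 0 < bil v eU

/-- `g` preserves the future cone; `O↑(Λ)` is the set of isometries with this property. -/
def PreservesFuture (g : Vec ≃ₗ[ℚ] Vec) : Prop := ∀ v : Vec, InFuture v → InFuture (g v)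

/-- A null vector: a primitive lattice vector of norm `0` which is
future-directed, i.e. pairs positively with `(0,…,0;1,1)`. -/
def IsNull (v : Vec) : Prop :=
  mem v ∧ bil v v = 0 ∧ 0 < bil v eU ∧
    ∀ (k : ℤ) (w : Vec), mem w → v = (k : ℚ) • w → k = 1 ∨ k = -1

/-- the null vector `ρ = (0,…,0;1,0)` -/
def ρ : Vec := ![0,0,0,0,0,0,0,0,1,0]

/-- the root `ν = (½,½,½,½,½,½,½,½;0,0)` -/
def ν : Vec := ![1/2,1/2,1/2,1/2,1/2,1/2,1/2,1/2,0,0]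

def f1 : Vec := ![1,-1,0,0,0,0,0,0,0,0]
def f2 : Vec := ![0,1,-1,0,0,0,0,0,0,0]
def f3 : Vec := ![0,0,1,-1,0,0,0,0,0,0]
def f4 : Vec := ![0,0,0,1,-1,0,0,0,0,0]
def f5 : Vec := ![0,0,0,0,1,-1,0,0,0,0]
def f6 : Vec := ![0,0,0,0,0,1,-1,0,0,0]
def f7 : Vec := ![0,0,0,0,0,0,1,-1,1,0]
def f8 : Vec := ![-1/2,-1/2,-1/2,-1/2,1/2,1/2,1/2,1/2,0,0]
def f9 : Vec := ![0,0,0,0,0,0,0,0,-1,1]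

lemma ν_norm : bil ν ν = -2 := by norm_num [bil, ν]
lemma f1_norm : bil f1 f1 = -2 := by norm_num [bil, f1]
lemma f2_norm : bil f2 f2 = -2 := by norm_num [bil, f2]
lemma f3_norm : bil f3 f3 = -2 := by norm_num [bil, f3]
lemma f4_norm : bil f4 f4 = -2 := by norm_num [bil, f4]
lemma f5_norm : bil f5 f5 = -2 := by norm_num [bil, f5]
lemma f6_norm : bil f6 f6 = -2 := by norm_num [bil, f6]
lemma f7_norm : bil f7 f7 = -2 := by norm_num [bil, f7]
lemma f8_norm : bil f8 f8 = -2 := by norm_num [bil, f8]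
lemma f9_norm : bil f9 f9 = -2 := by norm_num [bil, f9]

/-- A Kantor involution relative to `ν`: an involution `K ∈ O(Λ)` fixing `ν`,
for which there is an orthogonal direct-sum decomposition `ν⊥ = L ⊕ M`, where
`M` is spanned by two norm-`0` vectors `e, f` with `e·f = 1`, such that `K`
acts as `−1` on `L` and fixes `M` pointwise. -/
def IsKantor (K : Vec ≃ₗ[ℚ] Vec) : Prop :=
  IsIsometry K ∧ K * K = 1 ∧ K ν = ν ∧
    ∃ e f : Vec, mem e ∧ mem f ∧ bil e ν = 0 ∧ bil f ν = 0 ∧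
      bil e e = 0 ∧ bil f f = 0 ∧ bil e f = 1 ∧ K e = e ∧ K f = f ∧
      ∀ x : Vec, mem x → bil x ν = 0 →
        ∃ (a : Vec) (m n : ℤ), mem a ∧ bil a ν = 0 ∧ K a = -a ∧
          x = a + (m : ℚ) • e + (n : ℚ) • f



section MyAux

lemma my_mem_zero : mem (0 : Vec) :=
  ⟨⟨0, by norm_num⟩, ⟨0, by norm_num⟩, Or.inl fun i hi => ⟨0, by norm_num⟩,
    ⟨0, by simp [sum8]⟩⟩

lemma my_mem_nu : mem ν := by
  refine ⟨⟨0, by norm_num [ν]⟩, ⟨0, by norm_num [ν]⟩, Or.inr ?_, ⟨2, by norm_num [sum8, ν]⟩⟩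
  intro i hi
  refine ⟨0, ?_⟩
  fin_cases i <;> revert hi <;> norm_num [ν]

lemma my_sum8_add (x y : Vec) : sum8 (x + y) = sum8 x + sum8 y := by
  simp only [sum8, Pi.add_apply]; ring

lemma my_mem_add {x y : Vec} (hx : mem x) (hy : mem y) : mem (x + y) := by
  obtain ⟨⟨a8, ha8⟩, ⟨a9, ha9⟩, hlx, ⟨k, hk⟩⟩ := hx
  obtain ⟨⟨b8, hb8⟩, ⟨b9, hb9⟩, hly, ⟨l, hl⟩⟩ := hy
  refine ⟨⟨a8 + b8, by simp [ha8, hb8]⟩, ⟨a9 + b9, by simp [ha9, hb9]⟩, ?_,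
    ⟨k + l, by rw [my_sum8_add, hk, hl]; push_cast; ring⟩⟩
  rcases hlx with hlx | hlx <;> rcases hly with hly | hly
  · refine Or.inl fun i hi => ?_
    obtain ⟨n, hn⟩ := hlx i hi; obtain ⟨m, hm⟩ := hly i hi
    exact ⟨n + m, by simp [hn, hm]⟩
  · refine Or.inr fun i hi => ?_
    obtain ⟨n, hn⟩ := hlx i hi; obtain ⟨m, hm⟩ := hly i hi
    refine ⟨n + m, ?_⟩
    simp only [Pi.add_apply, hn, hm]; push_cast; ring
  · refine Or.inr fun i hi => ?_
    obtain ⟨n, hn⟩ := hlx i hi; obtain ⟨m, hm⟩ := hly i hi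
    refine ⟨n + m, ?_⟩
    simp only [Pi.add_apply, hn, hm]; push_cast; ring
  · refine Or.inl fun i hi => ?_
    obtain ⟨n, hn⟩ := hlx i hi; obtain ⟨m, hm⟩ := hly i hi
    refine ⟨n + m + 1, ?_⟩
    simp only [Pi.add_apply, hn, hm]; push_cast; ring

lemma my_mem_neg {x : Vec} (hx : mem x) : mem (-x) := by
  obtain ⟨⟨a8, ha8⟩, ⟨a9, ha9⟩, hlx, ⟨k, hk⟩⟩ := hx
  refine ⟨⟨-a8, by simp [ha8]⟩, ⟨-a9, by simp [ha9]⟩, ?_,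
    ⟨-k, by simp only [sum8, Pi.neg_apply] at *; push_cast; linarith⟩⟩
  rcases hlx with hlx | hlx
  · refine Or.inl fun i hi => ?_
    obtain ⟨n, hn⟩ := hlx i hi
    exact ⟨-n, by simp [hn]⟩
  · refine Or.inr fun i hi => ?_
    obtain ⟨n, hn⟩ := hlx i hi
    refine ⟨-n - 1, ?_⟩
    simp only [Pi.neg_apply, hn]; push_cast; ring

lemma my_mem_sub {x y : Vec} (hx : mem x) (hy : mem y) : mem (x - y) := by
  rw [sub_eq_add_neg]; exact my_mem_add hx (my_mem_neg hy)

lemma my_mem_zsmul (k : ℤ) {x : Vec} (hx : mem x) : mem ((k : ℚ) • x) := by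
  induction k using Int.induction_on with
  | zero => simpa using my_mem_zero
  | succ n ih =>
      have h : ((n + 1 : ℤ) : ℚ) • x = ((n : ℤ) : ℚ) • x + x := by
        push_cast; rw [add_smul, one_smul]
      rw [h]; exact my_mem_add ih hx
  | pred n ih =>
      have h : ((-n - 1 : ℤ) : ℚ) • x = ((-n : ℤ) : ℚ) • x - x := by
        push_cast; rw [sub_smul, one_smul]
      rw [h]; exact my_mem_sub ih hx

lemma my_all_int {x : Vec} (h8 : ∃ n : ℤ, x 8 = n) (h9 : ∃ n : ℤ, x 9 = n)
    (hl : lowInt x) : ∀ i : Fin 10, ∃ n : ℤ, x i = n := by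
  intro i
  rcases Nat.lt_or_ge i.val 8 with h | h
  · exact hl i h
  · have hv : i.val = 8 ∨ i.val = 9 := by omega
    rcases hv with hv | hv
    · have hi : i = (8 : Fin 10) := Fin.ext (by simpa using hv)
      rw [hi]; exact h8
    · have hi : i = (9 : Fin 10) := Fin.ext (by simpa using hv)
      rw [hi]; exact h9

lemma my_bil_int_core {x y : Vec} (hx8 : ∃ n : ℤ, x 8 = n) (hx9 : ∃ n : ℤ, x 9 = n)
    (hlx : lowInt x) (hy8 : ∃ n : ℤ, y 8 = n) (hy9 : ∃ n : ℤ, y 9 = n)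
    (hly : lowInt y) : ∃ n : ℤ, bil x y = n := by
  choose f hf using my_all_int hx8 hx9 hlx
  choose g hg using my_all_int hy8 hy9 hly
  refine ⟨f 8 * g 9 + f 9 * g 8 -
    (f 0 * g 0 + f 1 * g 1 + f 2 * g 2 + f 3 * g 3 +
     f 4 * g 4 + f 5 * g 5 + f 6 * g 6 + f 7 * g 7), ?_⟩
  simp only [bil, hf, hg]; push_cast; ring

lemma my_lowInt_sub_nu {x : Vec} (hx : lowHalf x) : lowInt (x - ν) := by
  intro i hi
  obtain ⟨n, hn⟩ := hx i hi
  refine ⟨n, ?_⟩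
  have hnu : ν i = 1/2 := by fin_cases i <;> revert hi <;> norm_num [ν]
  simp only [Pi.sub_apply, hn, hnu]; ring

lemma my_bil_nu_int {y : Vec} (hy : mem y) : ∃ n : ℤ, bil ν y = n := by
  obtain ⟨_, _, _, ⟨l, hl⟩⟩ := hy
  refine ⟨-l, ?_⟩
  simp only [bil, ν, sum8, vec10_0, vec10_1, vec10_2, vec10_3, vec10_4, vec10_5,
    vec10_6, vec10_7, vec10_8, vec10_9] at hl ⊢
  push_cast
  linarith

lemma my_bil_int {x y : Vec} (hx : mem x) (hy : mem y) : ∃ n : ℤ, bil x y = n := by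
  obtain ⟨hx8, hx9, hlx, hsx⟩ := hx
  obtain ⟨hy8, hy9, hly, hsy⟩ := hy
  have hmx : mem x := ⟨hx8, hx9, hlx, hsx⟩
  have hmy : mem y := ⟨hy8, hy9, hly, hsy⟩
  rcases hlx with hlx | hlx <;> rcases hly with hly | hly
  · exact my_bil_int_core hx8 hx9 hlx hy8 hy9 hly
  · obtain ⟨n1, h1⟩ := my_bil_int_core hx8 hx9 hlx
      ((my_mem_sub hmy my_mem_nu).1) ((my_mem_sub hmy my_mem_nu).2.1)
      (my_lowInt_sub_nu hly)
    obtain ⟨n2, h2⟩ := my_bil_nu_int hmx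
    refine ⟨n1 + n2, ?_⟩
    have e1 : bil x (y - ν) = bil x y - bil x ν := bil_sub_right x y ν
    have e2 : bil x ν = bil ν x := bil_comm x ν
    push_cast; linarith
  · obtain ⟨n1, h1⟩ := my_bil_int_core
      ((my_mem_sub hmx my_mem_nu).1) ((my_mem_sub hmx my_mem_nu).2.1)
      (my_lowInt_sub_nu hlx) hy8 hy9 hly
    obtain ⟨n2, h2⟩ := my_bil_nu_int hmy
    refine ⟨n1 + n2, ?_⟩
    have e1 : bil (x - ν) y = bil x y - bil ν y := bil_sub_left x ν y
    push_cast; linarith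
  · obtain ⟨n1, h1⟩ := my_bil_int_core
      ((my_mem_sub hmx my_mem_nu).1) ((my_mem_sub hmx my_mem_nu).2.1)
      (my_lowInt_sub_nu hlx)
      ((my_mem_sub hmy my_mem_nu).1) ((my_mem_sub hmy my_mem_nu).2.1)
      (my_lowInt_sub_nu hly)
    obtain ⟨n2, h2⟩ := my_bil_nu_int hmy
    obtain ⟨n3, h3⟩ := my_bil_nu_int hmx
    refine ⟨n1 + n2 + n3 + 2, ?_⟩
    have e1 : bil (x - ν) (y - ν) = bil x y - bil x ν - (bil ν y - bil ν ν) := by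
      rw [bil_sub_left, bil_sub_right, bil_sub_right]
    have e2 : bil x ν = bil ν x := bil_comm x ν
    have e3 : bil ν ν = -2 := ν_norm
    push_cast; linarith

lemma my_bil_neg_left (x y : Vec) : bil (-x) y = -bil x y := by
  simp only [bil, Pi.neg_apply]; ring

end MyAux

/-- A Kantor involution `K` relative to `ν` acts on `V = Λ/2Λ`
as the transvection in `ν̄`, i.e. `x̄ ↦ x̄ + (x̄·ν̄)ν̄`: for every lattice vector
`x`, `K x ≡ x + (x·ν)ν (mod 2Λ)`. -/
theorem kantor_acts_as_transvection :
    ∀ K : Vec ≃ₗ[ℚ] Vec, IsKantor K →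
      ∀ x : Vec, mem x →
        ∃ w : Vec, mem w ∧ K x - x - bil x ν • ν = (2 : ℚ) • w := by
  intro K hK x hx
  obtain ⟨hIso, hInv, hKν, e, f, hme, hmf, heν, hfν, hee, hff, hef, hKe, hKf, hspec⟩ := hK
  obtain ⟨cz, hc⟩ := my_bil_int hx my_mem_nu
  set y : Vec := (2 : ℚ) • x + (cz : ℚ) • ν with hy
  have hmy : mem y := my_mem_add (by exact_mod_cast my_mem_zsmul 2 hx) (my_mem_zsmul cz my_mem_nu)
  have hyν : bil y ν = 0 := by
    rw [hy, bil_add_left, bil_smul_left, bil_smul_left, ν_norm, hc]; ring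
  obtain ⟨a, m, n, hma, haν, hKa, hdec⟩ := hspec y hmy hyν
  -- a is orthogonal to e and f
  have hae : bil a e = 0 := by
    have h := hIso.2 a e
    rw [hKa, hKe, my_bil_neg_left] at h
    linarith
  have haf : bil a f = 0 := by
    have h := hIso.2 a f
    rw [hKa, hKf, my_bil_neg_left] at h
    linarith
  -- compute bil y e and bil y f two ways
  have hye1 : bil y e = (n : ℚ) := by
    rw [hdec, bil_add_left, bil_add_left, bil_smul_left, bil_smul_left, hae, hee,
      bil_comm f e, hef]
    ring
  have hye2 : bil y e = 2 * bil x e := by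
    rw [hy, bil_add_left, bil_smul_left, bil_smul_left, bil_comm ν e, heν]
    ring
  have hyf1 : bil y f = (m : ℚ) := by
    rw [hdec, bil_add_left, bil_add_left, bil_smul_left, bil_smul_left, haf, hef, hff]
    ring
  have hyf2 : bil y f = 2 * bil x f := by
    rw [hy, bil_add_left, bil_smul_left, bil_smul_left, bil_comm ν f, hfν]
    ring
  obtain ⟨me_, hme_⟩ := my_bil_int hx hme
  obtain ⟨mf_, hmf_⟩ := my_bil_int hx hmf
  have hn2 : (n : ℚ) = 2 * (me_ : ℚ) := by rw [← hme_, ← hye2, hye1]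
  have hm2 : (m : ℚ) = 2 * (mf_ : ℚ) := by rw [← hmf_, ← hyf2, hyf1]
  -- K applied to y
  have hKy : K y = -a + (m : ℚ) • e + (n : ℚ) • f := by
    rw [hdec]
    simp only [map_add, map_smul, hKa, hKe, hKf]
  have hKy2 : K y = (2 : ℚ) • K x + (cz : ℚ) • ν := by
    rw [hy]
    simp only [map_add, map_smul, hKν]
  refine ⟨(mf_ : ℚ) • e + (me_ : ℚ) • f + ((-1 : ℤ) : ℚ) • x + ((-cz : ℤ) : ℚ) • ν,
    ?_, ?_⟩
  · exact my_mem_add (my_mem_add (my_mem_add (my_mem_zsmul mf_ hme)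
      (my_mem_zsmul me_ hmf)) (my_mem_zsmul (-1) hx)) (my_mem_zsmul (-cz) my_mem_nu)
  · have h2 : Function.Injective (fun v : Vec => (2 : ℚ) • v) :=
      smul_right_injective Vec two_ne_zero
    apply h2
    have key : (2 : ℚ) • K x = -a + (m : ℚ) • e + (n : ℚ) • f - (cz : ℚ) • ν := by
      have hcomb := hKy2.symm.trans hKy
      rw [← hcomb]
      abel
    have ha : a = (2 : ℚ) • x + (cz : ℚ) • ν - (m : ℚ) • e - (n : ℚ) • f := by
      rw [hy] at hdec
      rw [hdec]
      abel
    show (2 : ℚ) • (K x - x - bil x ν • ν) = (2 : ℚ) • ((2 : ℚ) • _)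
    rw [hc, smul_sub, smul_sub, key, ha, hm2, hn2]
    push_cast
    module
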